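/- Let Y, D, X be random variables with joint distribution P(D,X,Y), where D ranges over M×N real matrices. For any estimator D̂(Y) satisfying the column normalization constraint ‖(D̂(Y))_i‖² = M for each column i, the mean squared error (NM)⁻¹ E[‖D − D̂(Y)‖²_F] is bounded below by 2 − 2 E_Y[ N⁻¹ Σᵢ ‖(E[D|Y])_i‖ / √M ], where (A)_i denotes the i-th column of A and ‖·‖ the Euclidean/Frobenius norm. Equality holds for the estimator (D̂(Y))_i = √M · (E[D|Y])_i / ‖(E[D|Y])_i‖. -/

import Mathlib

open Finset

/-- Cauchy–Schwarz for finite sums. -/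
private lemma cs_sum {n : ℕ} (a b : Fin n → ℝ) :
    ∑ μ, a μ * b μ ≤ Real.sqrt (∑ μ, a μ ^ 2) * Real.sqrt (∑ μ, b μ ^ 2) := by
  have h := Finset.sum_mul_sq_le_sq_mul_sq Finset.univ a b
  have h1 : ∑ μ, a μ * b μ ≤ |∑ μ, a μ * b μ| := le_abs_self _
  calc ∑ μ, a μ * b μ ≤ |∑ μ, a μ * b μ| := h1
    _ = Real.sqrt ((∑ μ, a μ * b μ) ^ 2) := (Real.sqrt_sq_eq_abs _).symm
    _ ≤ Real.sqrt ((∑ μ, a μ ^ 2) * ∑ μ, b μ ^ 2) := Real.sqrt_le_sqrt h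
    _ = Real.sqrt (∑ μ, a μ ^ 2) * Real.sqrt (∑ μ, b μ ^ 2) := by
        exact Real.sqrt_mul (by positivity) _

/-- Lower bound on the dictionary MSE for any column-normalized estimator,
with equality for the Bayes-optimal (normalized posterior mean) estimator. -/
theorem dictionary_mse_lower_bound
    {Ω 𝓨 : Type} [Fintype Ω] [Fintype 𝓨] [DecidableEq 𝓨]
    (M N : ℕ) (hM : 0 < M) (hN : 0 < N)
    (p : Ω → ℝ) (hp : ∀ ω, 0 ≤ p ω) (hp1 : ∑ ω, p ω = 1)
    (D : Ω → Matrix (Fin M) (Fin N) ℝ) (Y : Ω → 𝓨)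
    (hD : ∀ ω, p ω ≠ 0 → ∀ i, ∑ μ, (D ω μ i) ^ 2 = M)
    (Dhat : 𝓨 → Matrix (Fin M) (Fin N) ℝ)
    (hDhat : ∀ y i, ∑ μ, (Dhat y μ i) ^ 2 = M)
    (post : 𝓨 → Matrix (Fin M) (Fin N) ℝ)
    (hpost : ∀ y, post y =
      (∑ ω, if Y ω = y then p ω else 0)⁻¹ • ∑ ω, if Y ω = y then p ω • D ω else 0) :
    (1 / (N * M) : ℝ) * ∑ ω, p ω * (∑ μ, ∑ i, (D ω μ i - Dhat (Y ω) μ i) ^ 2)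
      ≥ 2 - 2 * ∑ ω, p ω *
          ((1 / N : ℝ) * ∑ i, Real.sqrt (∑ μ, (post (Y ω) μ i) ^ 2) / Real.sqrt M)
    ∧ ((∀ ω, p ω ≠ 0 → ∀ i μ,
          Dhat (Y ω) μ i =
            Real.sqrt M * post (Y ω) μ i / Real.sqrt (∑ ν, (post (Y ω) ν i) ^ 2)) →
        (1 / (N * M) : ℝ) * ∑ ω, p ω * (∑ μ, ∑ i, (D ω μ i - Dhat (Y ω) μ i) ^ 2)
          = 2 - 2 * ∑ ω, p ω *
              ((1 / N : ℝ) * ∑ i, Real.sqrt (∑ μ, (post (Y ω) μ i) ^ 2) / Real.sqrt M)) := by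
  classical
  have hc : (0:ℝ) < (M:ℝ) := by exact_mod_cast hM
  have hNc : (0:ℝ) < (N:ℝ) := by exact_mod_cast hN
  set c : ℝ := (M:ℝ) with hcdef
  set t : ℝ := Real.sqrt c with htdef
  have ht : 0 < t := Real.sqrt_pos.mpr hc
  have ht2 : t ^ 2 = c := Real.sq_sqrt hc.le
  -- fiber weights
  set s : 𝓨 → ℝ := fun y => ∑ ω, if Y ω = y then p ω else 0 with hsdef
  have hs0 : ∀ y, 0 ≤ s y := by
    intro y
    exact Finset.sum_nonneg fun ω _ => by by_cases h : Y ω = y <;> simp [h, hp ω]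
  -- if s y = 0 then every p ω in the fiber vanishes
  have hszero : ∀ y, s y = 0 → ∀ ω, Y ω = y → p ω = 0 := by
    intro y hy ω hω
    have := (Finset.sum_eq_zero_iff_of_nonneg
      (fun ω _ => by by_cases h : Y ω = y <;> simp [h, hp ω])).mp hy ω (Finset.mem_univ ω)
    simpa [hω] using this
  -- entrywise fiber identity
  have hfiber : ∀ y μ i,
      s y * post y μ i = ∑ ω, if Y ω = y then p ω * D ω μ i else 0 := by
    intro y μ i
    by_cases hy : s y = 0
    · have : ∀ ω, (if Y ω = y then p ω * D ω μ i else 0) = 0 := by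
        intro ω
        by_cases h : Y ω = y
        · simp [h, hszero y hy ω h]
        · simp [h]
      simp [hy, Finset.sum_congr rfl fun ω _ => this ω]
    · have h := hpost y
      have h1 : post y μ i = (s y)⁻¹ * (∑ ω, if Y ω = y then p ω • D ω else 0) μ i := by
        rw [h]; rfl
      have h2 : (∑ ω, if Y ω = y then p ω • D ω else 0 : Matrix (Fin M) (Fin N) ℝ) μ i
          = ∑ ω, if Y ω = y then p ω * D ω μ i else 0 := by
        rw [Matrix.sum_apply]
        refine Finset.sum_congr rfl fun ω _ => ?_
        by_cases h : Y ω = y <;> simp [h]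
      rw [h1, h2, ← mul_assoc, mul_inv_cancel₀ hy, one_mul]
  -- grouping lemma for dot products against any Y-measurable matrix family
  have hgroup : ∀ (A : 𝓨 → Matrix (Fin M) (Fin N) ℝ),
      ∑ ω, p ω * (∑ i, ∑ μ, D ω μ i * A (Y ω) μ i)
        = ∑ y, s y * (∑ i, ∑ μ, post y μ i * A y μ i) := by
    intro A
    have step : ∀ y, s y * (∑ i, ∑ μ, post y μ i * A y μ i)
        = ∑ ω, if Y ω = y then p ω * (∑ i, ∑ μ, D ω μ i * A y μ i) else 0 := by
      intro y
      calc s y * (∑ i, ∑ μ, post y μ i * A y μ i)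
          = ∑ i, ∑ μ, (s y * post y μ i) * A y μ i := by
            rw [Finset.mul_sum]; congr 1; ext i
            rw [Finset.mul_sum]; congr 1; ext μ; ring
        _ = ∑ i, ∑ μ, (∑ ω, if Y ω = y then p ω * D ω μ i else 0) * A y μ i := by
            refine Finset.sum_congr rfl fun i _ => Finset.sum_congr rfl fun μ _ => ?_
            rw [hfiber y μ i]
        _ = ∑ i, ∑ μ, ∑ ω, (if Y ω = y then p ω * D ω μ i else 0) * A y μ i := by
            refine Finset.sum_congr rfl fun i _ => Finset.sum_congr rfl fun μ _ => ?_
            rw [Finset.sum_mul]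
        _ = ∑ i, ∑ ω, ∑ μ, (if Y ω = y then p ω * D ω μ i else 0) * A y μ i :=
            Finset.sum_congr rfl fun i _ => Finset.sum_comm
        _ = ∑ ω, ∑ i, ∑ μ, (if Y ω = y then p ω * D ω μ i else 0) * A y μ i :=
            Finset.sum_comm
        _ = ∑ ω, if Y ω = y then p ω * (∑ i, ∑ μ, D ω μ i * A y μ i) else 0 := by
            refine Finset.sum_congr rfl fun ω _ => ?_
            by_cases h : Y ω = y
            · simp only [h, if_true, Finset.mul_sum]
              congr 1; ext i; congr 1; ext μ; ring
            · simp [h]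
    calc ∑ ω, p ω * (∑ i, ∑ μ, D ω μ i * A (Y ω) μ i)
        = ∑ ω, ∑ y, if Y ω = y then p ω * (∑ i, ∑ μ, D ω μ i * A y μ i) else 0 := by
          refine Finset.sum_congr rfl fun ω _ => ?_
          simp
      _ = ∑ y, ∑ ω, if Y ω = y then p ω * (∑ i, ∑ μ, D ω μ i * A y μ i) else 0 :=
          Finset.sum_comm
      _ = ∑ y, s y * (∑ i, ∑ μ, post y μ i * A y μ i) := by
          refine Finset.sum_congr rfl fun y _ => (step y).symm
  -- grouping for scalar functions of y
  have hgroup2 : ∀ (h : 𝓨 → ℝ), ∑ ω, p ω * h (Y ω) = ∑ y, s y * h y := by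
    intro h
    calc ∑ ω, p ω * h (Y ω)
        = ∑ ω, ∑ y, if Y ω = y then p ω * h y else 0 := by
          refine Finset.sum_congr rfl fun ω _ => ?_
          simp
      _ = ∑ y, ∑ ω, if Y ω = y then p ω * h y else 0 := Finset.sum_comm
      _ = ∑ y, s y * h y := by
          refine Finset.sum_congr rfl fun y _ => ?_
          rw [hsdef]
          simp only [Finset.sum_mul]
          refine Finset.sum_congr rfl fun ω _ => ?_
          by_cases h' : Y ω = y <;> simp [h']
  -- shorthand notations
  set r : 𝓨 → Fin N → ℝ := fun y i => Real.sqrt (∑ μ, (post y μ i) ^ 2) with hrdef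
  -- expansion of the MSE
  have hexp : ∑ ω, p ω * (∑ μ, ∑ i, (D ω μ i - Dhat (Y ω) μ i) ^ 2)
      = 2 * (N * c) - 2 * ∑ ω, p ω * (∑ i, ∑ μ, D ω μ i * Dhat (Y ω) μ i) := by
    have step : ∀ ω, p ω * (∑ μ, ∑ i, (D ω μ i - Dhat (Y ω) μ i) ^ 2)
        = p ω * (2 * (N * c)) - 2 * (p ω * (∑ i, ∑ μ, D ω μ i * Dhat (Y ω) μ i)) := by
      intro ω
      by_cases hpω : p ω = 0
      · simp [hpω]
      · have e1 : ∑ μ, ∑ i, (D ω μ i - Dhat (Y ω) μ i) ^ 2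
            = ∑ i, ∑ μ, (D ω μ i - Dhat (Y ω) μ i) ^ 2 := Finset.sum_comm
        have e2 : ∀ i : Fin N, ∑ μ, (D ω μ i - Dhat (Y ω) μ i) ^ 2
            = c + c - 2 * ∑ μ, D ω μ i * Dhat (Y ω) μ i := by
          intro i
          have ha := hD ω hpω i
          have hb := hDhat (Y ω) i
          have : ∑ μ, (D ω μ i - Dhat (Y ω) μ i) ^ 2
              = ∑ μ, ((D ω μ i)^2 + (Dhat (Y ω) μ i)^2 - 2 * (D ω μ i * Dhat (Y ω) μ i)) := by
            refine Finset.sum_congr rfl fun μ _ => by ring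
          rw [this, Finset.sum_sub_distrib, Finset.sum_add_distrib, ha, hb,
            ← Finset.mul_sum]
        have e3 : ∑ i : Fin N, (c + c - 2 * ∑ μ, D ω μ i * Dhat (Y ω) μ i)
            = 2 * (N * c) - 2 * ∑ i, ∑ μ, D ω μ i * Dhat (Y ω) μ i := by
          rw [Finset.sum_sub_distrib, Finset.sum_const, ← Finset.mul_sum]
          simp [Finset.card_univ]
          ring
        rw [e1, Finset.sum_congr rfl fun i _ => e2 i, e3]
        ring
    rw [Finset.sum_congr rfl fun ω _ => step ω, Finset.sum_sub_distrib,
      ← Finset.sum_mul, hp1, ← Finset.mul_sum]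
    ring
  -- per-fiber Cauchy-Schwarz
  have hCS : ∀ y, (∑ i, ∑ μ, post y μ i * Dhat y μ i) ≤ t * ∑ i, r y i := by
    intro y
    rw [Finset.mul_sum]
    refine Finset.sum_le_sum fun i _ => ?_
    have := cs_sum (fun μ => post y μ i) (fun μ => Dhat y μ i)
    calc ∑ μ, post y μ i * Dhat y μ i
        ≤ Real.sqrt (∑ μ, (post y μ i)^2) * Real.sqrt (∑ μ, (Dhat y μ i)^2) := this
      _ = t * r y i := by rw [hDhat y i, hrdef]; ring
  -- the key inequality on grouped dot product
  have hkey : ∑ ω, p ω * (∑ i, ∑ μ, D ω μ i * Dhat (Y ω) μ i)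
      ≤ t * ∑ y, s y * (∑ i, r y i) := by
    rw [hgroup Dhat, Finset.mul_sum]
    refine Finset.sum_le_sum fun y _ => ?_
    calc s y * (∑ i, ∑ μ, post y μ i * Dhat y μ i)
        ≤ s y * (t * ∑ i, r y i) := mul_le_mul_of_nonneg_left (hCS y) (hs0 y)
      _ = t * (s y * (∑ i, r y i)) := by ring
  -- rewrite the RHS expectation
  have hB : ∑ ω, p ω * ((1 / N : ℝ) * ∑ i, r (Y ω) i / t)
      = (1 / (N * t)) * ∑ y, s y * (∑ i, r y i) := by
    rw [hgroup2 (fun y => (1 / N : ℝ) * ∑ i, r y i / t), Finset.mul_sum]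
    refine Finset.sum_congr rfl fun y _ => ?_
    rw [← Finset.sum_div]
    field_simp
    try ring
  -- abbreviations for final arithmetic
  set P : ℝ := ∑ ω, p ω * (∑ i, ∑ μ, D ω μ i * Dhat (Y ω) μ i) with hPdef
  set Q : ℝ := ∑ y, s y * (∑ i, r y i) with hQdef
  have hQ0 : 0 ≤ Q := by
    refine Finset.sum_nonneg fun y _ => mul_nonneg (hs0 y) ?_
    exact Finset.sum_nonneg fun i _ => Real.sqrt_nonneg _
  constructor
  · -- inequality
    rw [hexp, hB]
    have h1 : (1 / (N * c) : ℝ) * (2 * (N * c) - 2 * P)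
        = 2 - 2 * P / (N * c) := by
      field_simp
      try ring
    rw [h1]
    have h2 : 2 * P / (N * c) ≤ 2 * ((1 / (N * t)) * Q) := by
      rw [div_le_iff₀ (by positivity)]
      have : 2 * ((1 / (N * t)) * Q) * (N * c) = 2 * (t * Q) := by
        rw [← ht2]; field_simp
      rw [this]
      nlinarith [hkey]
    linarith
  · -- equality case
    intro heq
    have hkeyeq : P = t * Q := by
      rw [hPdef, hgroup Dhat, hQdef, Finset.mul_sum]
      refine Finset.sum_congr rfl fun y _ => ?_
      by_cases hy : s y = 0
      · simp [hy]
      · obtain ⟨ω₀, hω₀⟩ := Finset.exists_ne_zero_of_sum_ne_zero hy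
        have hpω₀ : p ω₀ ≠ 0 := by
          intro h; exact hω₀.2 (by by_cases h' : Y ω₀ = y <;> simp [h', h])
        have hYω₀ : Y ω₀ = y := by
          by_contra h'; exact hω₀.2 (by simp [h'])
        have hcol : ∀ i, ∑ μ, post y μ i * Dhat y μ i = t * r y i := by
          intro i
          have hri : r y i ≠ 0 := by
            intro h0
            have h0' : Real.sqrt (∑ μ, (post y μ i) ^ 2) = 0 := h0
            have hle := Real.sqrt_eq_zero'.mp h0'
            have hge : (0:ℝ) ≤ ∑ μ, (post y μ i) ^ 2 := by positivity
            have hsum0 : ∑ μ, (post y μ i) ^ 2 = 0 := le_antisymm hle hge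
            have hpz : ∀ μ, post y μ i = 0 := by
              intro μ
              have := (Finset.sum_eq_zero_iff_of_nonneg
                (fun μ _ => sq_nonneg (post y μ i))).mp hsum0 μ (Finset.mem_univ μ)
              exact pow_eq_zero_iff (n := 2) (by norm_num) |>.mp this
            have hd0 : ∀ μ, Dhat y μ i = 0 := by
              intro μ
              have := heq ω₀ hpω₀ i μ
              rw [hYω₀] at this
              rw [this, hpz μ]
              simp
            have hcc := hDhat y i
            rw [Finset.sum_congr rfl (fun μ _ => by rw [hd0 μ] : ∀ μ ∈ Finset.univ, (Dhat y μ i)^2 = (0:ℝ)^2)] at hcc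
            simp at hcc
            exact hc.ne' hcc.symm
          have hform : ∀ μ, Dhat y μ i = t * post y μ i / r y i := by
            intro μ
            have := heq ω₀ hpω₀ i μ
            rw [hYω₀] at this
            exact this
          have hr2 : r y i ^ 2 = ∑ μ, (post y μ i) ^ 2 :=
            Real.sq_sqrt (by positivity)
          calc ∑ μ, post y μ i * Dhat y μ i
              = ∑ μ, post y μ i * (t * post y μ i / r y i) :=
                Finset.sum_congr rfl fun μ _ => by rw [hform μ]
            _ = (t / r y i) * ∑ μ, (post y μ i)^2 := by
                rw [Finset.mul_sum]
                refine Finset.sum_congr rfl fun μ _ => ?_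
                ring
            _ = (t / r y i) * r y i ^ 2 := by rw [hr2]
            _ = t * r y i := by
                rw [pow_two, ← mul_assoc, div_mul_cancel₀ t hri]
        rw [Finset.sum_congr rfl fun i _ => hcol i, ← Finset.mul_sum]
        ring
    rw [hexp, hB, hkeyeq]
    have h1 : (1 / (N * c) : ℝ) * (2 * (N * c) - 2 * (t * Q))
        = 2 - 2 * (t * Q) / (N * c) := by
      field_simp; try ring
    rw [h1]
    congr 1
    rw [← ht2]
    field_simp
    try ring
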